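/- Let λ be a cardinal such that Pr_{ω₁}(λ) holds. If B ⊆ 2^ω × 2^ω is an analytic set containing a (λ, λ)-rectangle A₁ × A₂ with A₁, A₂ ⊆ 2^ω each of cardinality λ, then B contains a perfect rectangle P₁ × P₂ with P₁, P₂ ⊆ 2^ω nonempty perfect sets. -/

import Mathlib

open FirstOrder Cardinal

universe u

namespace Sh522

/-- `a ∈ clLt L M κ B` iff `a` is in the `<κ`-closure of `B` in `M`:
for some quantifier-free formula `φ(y, x₁, …, xₙ)` and parameters `b` from `B`,
`M ⊨ φ[a, b]` and the set of solutions of `φ(−, b)` has cardinality `< κ`. -/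
def clLt (L : FirstOrder.Language.{u, u}) (M : Type u) [L.Structure M]
    (κ : Cardinal.{u}) (B : Set M) : Set M :=
  {a | ∃ (n : ℕ) (φ : L.Formula (Fin (n + 1))),
      FirstOrder.Language.BoundedFormula.IsQF φ ∧
      ∃ b : Fin n → M, (∀ i, b i ∈ B) ∧
        φ.Realize (Fin.cons a b) ∧
        Cardinal.mk {x : M // φ.Realize (Fin.cons x b)} < κ}

/-- `rk^l(w, M; <κ) ≥ 0`. -/
def rkBase (L : FirstOrder.Language.{u, u}) (M : Type u) [L.Structure M]
    (κ : Cardinal.{u}) (w : Set M) : Prop :=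
  w.Finite ∧ w.Nonempty ∧ ∀ a ∈ w, a ∉ clLt L M κ (w \ {a})

/-- The successor step of the rank: `rk^l(w, M; <κ) ≥ β + 1` where `P` is
`rk^l(−, M; <κ) ≥ β`. -/
def rkStep (L : FirstOrder.Language.{u, u}) (M : Type u) [L.Structure M]
    (l : ℕ) (κ : Cardinal.{u}) (P : Set M → Prop) (w : Set M) : Prop :=
  w.Finite ∧ w.Nonempty ∧
  ∀ (n : ℕ) (a : Fin n → M), Function.Injective a → Set.range a = w →
    ∀ (k : Fin n) (φ : L.Formula (Fin n)),
      FirstOrder.Language.BoundedFormula.IsQF φ → φ.Realize a →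
      ∃ b : Fin 2 → Fin n → M,
        P (Set.range fun p : Fin 2 × Fin n => b p.1 p.2) ∧
        (∀ i : Fin 2, φ.Realize (b i)) ∧
        b 0 k ≠ b 1 k ∧
        (∀ m : Fin n, m ≠ k → b 0 m = b 1 m) ∧
        (l = 0 → ∀ m : Fin n, b 0 m = a m)

/-- `rkGe L M l κ α w` says `rk^l(w, M; <κ) ≥ α`. -/
noncomputable def rkGe (L : FirstOrder.Language.{u, u}) (M : Type u) [L.Structure M]
    (l : ℕ) (κ : Cardinal.{u}) (α : Ordinal.{u}) : Set M → Prop :=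
  Ordinal.limitRecOn (motive := fun _ => Set M → Prop) α
    (rkBase L M κ)
    (fun _ ih => rkStep L M l κ ih)
    (fun o _ ih w => ∀ (β : Ordinal.{u}) (h : β < o), ih β h w)

/-- `Pr l α lam bound θ` is `Pr^l_α(lam; <bound, θ)`: every model with universe of
cardinality `lam` and vocabulary of cardinality `≤ θ` has `rk^l(M; <bound) ≥ α`,
where `rk^l(M; <bound) = sup { rk^l(w, M; <bound) + 1 : w ∈ [M]* }`. -/
def Pr (l : ℕ) (α : Ordinal.{u}) (lam bound θ : Cardinal.{u}) : Prop :=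
  ∀ (L : FirstOrder.Language.{u, u}) (M : Type u) (S : L.Structure M),
    Cardinal.mk M = lam → L.card ≤ θ →
    ∀ β < α, ∃ w : Set M, w.Finite ∧ w.Nonempty ∧ @rkGe L M S l bound β w
section RankLemmas

universe v

variable {L : FirstOrder.Language.{v, v}} {M : Type v} [S : L.Structure M]
  {l : ℕ} {κ : Cardinal.{v}}

theorem rkGe_zero : rkGe L M l κ 0 = rkBase L M κ :=
  Ordinal.limitRecOn_zero _ _ _

theorem rkGe_succ (β : Ordinal.{v}) :
    rkGe L M l κ (β + 1) = rkStep L M l κ (rkGe L M l κ β) := by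
  rw [rkGe, Ordinal.add_one_eq_succ, Ordinal.limitRecOn_succ]
  rfl

theorem rkGe_limit {o : Ordinal.{v}} (ho : Order.IsSuccLimit o) (w : Set M) :
    rkGe L M l κ o w ↔ ∀ β < o, rkGe L M l κ β w := by
  rw [rkGe, Ordinal.limitRecOn_limit _ _ _ _ ho]
  exact ⟨fun h β hβ => h β hβ, fun h β hβ => h β hβ⟩

theorem rkGe_finite_nonempty {β : Ordinal.{v}} {w : Set M} (h : rkGe L M l κ β w) :
    w.Finite ∧ w.Nonempty := by
  rcases Ordinal.zero_or_succ_or_isSuccLimit β with h0 | ⟨γ, rfl⟩ | hl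
  · subst h0; rw [rkGe_zero] at h; exact ⟨h.1, h.2.1⟩
  · rw [← Ordinal.add_one_eq_succ, rkGe_succ] at h; exact ⟨h.1, h.2.1⟩
  · have h0 := (rkGe_limit hl w).mp h 0 hl.pos
    rw [rkGe_zero] at h0; exact ⟨h0.1, h0.2.1⟩

/-- An enumeration of a finite set extending a given injective enumeration of a subset. -/
theorem exists_enum_ext {w' w : Set M} (hw : w.Finite) (hsub : w' ⊆ w) {n' : ℕ}
    (a' : Fin n' → M) (hinj : Function.Injective a') (hr : Set.range a' = w') :
    ∃ (m : ℕ) (a : Fin (n' + m) → M), Function.Injective a ∧ Set.range a = w ∧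
      ∀ j, a (Fin.castAdd m j) = a' j := by
  classical
  have hd : (w \ w').Finite := hw.subset Set.diff_subset
  haveI := hd.fintype
  refine ⟨Fintype.card ↥(w \ w'), Fin.addCases a' (fun i => ((Fintype.equivFin ↥(w \ w')).symm i : M)), ?_, ?_, fun j => Fin.addCases_left j⟩
  · intro i j hij
    induction i using Fin.addCases with
    | left i =>
      induction j using Fin.addCases with
      | left j =>
        simp only [Fin.addCases_left] at hij
        exact congrArg _ (hinj hij)
      | right j =>
        simp only [Fin.addCases_left, Fin.addCases_right] at hij
        have h1 : a' i ∈ w' := hr ▸ Set.mem_range_self i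
        have h2 : (((Fintype.equivFin ↥(w \ w')).symm j : M)) ∈ w \ w' :=
          ((Fintype.equivFin ↥(w \ w')).symm j).2
        exact absurd (hij ▸ h1) h2.2
    | right i =>
      induction j using Fin.addCases with
      | left j =>
        simp only [Fin.addCases_left, Fin.addCases_right] at hij
        have h1 : a' j ∈ w' := hr ▸ Set.mem_range_self j
        have h2 : (((Fintype.equivFin ↥(w \ w')).symm i : M)) ∈ w \ w' :=
          ((Fintype.equivFin ↥(w \ w')).symm i).2
        exact absurd (hij ▸ h1) h2.2
      | right j =>
        simp only [Fin.addCases_right] at hij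
        have := (Fintype.equivFin ↥(w \ w')).symm.injective (Subtype.val_injective hij)
        exact congrArg _ this
  · apply Set.eq_of_subset_of_subset
    · rintro x ⟨i, rfl⟩
      induction i using Fin.addCases with
      | left i => simp only [Fin.addCases_left]; exact hsub (hr ▸ Set.mem_range_self i)
      | right i => simp only [Fin.addCases_right]; exact ((Fintype.equivFin ↥(w \ w')).symm i).2.1
    · intro x hx
      by_cases hx' : x ∈ w'
      · rw [← hr] at hx'; obtain ⟨i, rfl⟩ := hx'
        exact ⟨Fin.castAdd _ i, Fin.addCases_left i⟩
      · have : x ∈ w \ w' := ⟨hx, hx'⟩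
        refine ⟨Fin.natAdd _ ((Fintype.equivFin ↥(w \ w')) ⟨x, this⟩), ?_⟩
        simp only [Fin.addCases_right, Equiv.symm_apply_apply]

end RankLemmas
section RankLemmas2

universe v

variable {L : FirstOrder.Language.{v, v}} {M : Type v} [S : L.Structure M]
  {l : ℕ} {κ : Cardinal.{v}}

theorem clLt_mono {B B' : Set M} (h : B ⊆ B') : clLt L M κ B ⊆ clLt L M κ B' := by
  rintro a ⟨n, φ, hqf, b, hb, hre, hcard⟩
  exact ⟨n, φ, hqf, b, fun i => h (hb i), hre, hcard⟩

/-- `rkGe` is monotone under passing to (nonempty) subsets. -/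
theorem rkGe_mono (β : Ordinal.{v}) :
    ∀ {w w' : Set M}, w' ⊆ w → w'.Nonempty → rkGe L M l κ β w → rkGe L M l κ β w' := by
  induction β using Ordinal.limitRecOn with
  | zero =>
    intro w w' hsub hne h
    rw [rkGe_zero] at h ⊢
    refine ⟨h.1.subset hsub, hne, fun a ha hcl => h.2.2 a (hsub ha) ?_⟩
    exact clLt_mono (Set.diff_subset_diff_left hsub) hcl
  | add_one β IH =>
    intro w w' hsub hne h
    rw [rkGe_succ] at h ⊢
    obtain ⟨hfin, hwne, hstep⟩ := h
    refine ⟨hfin.subset hsub, hne, ?_⟩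
    intro n' a' hinj' hr' k' φ' hqf' hre'
    obtain ⟨m, a, hinj, hr, hext⟩ := exists_enum_ext hfin hsub a' hinj' hr'
    have hφqf : (φ'.relabel (Fin.castAdd m)).IsQF := by
      apply FirstOrder.Language.BoundedFormula.IsQF.relabel hqf'
    have hφre : (φ'.relabel (Fin.castAdd m)).Realize a := by
      rw [FirstOrder.Language.Formula.realize_relabel]
      have : a ∘ Fin.castAdd m = a' := funext hext
      rw [this]; exact hre'
    obtain ⟨b, hP, hbre, hbne, hbeq, hb0⟩ :=
      hstep (n' + m) a hinj hr (Fin.castAdd m k') (φ'.relabel (Fin.castAdd m)) hφqf hφre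
    refine ⟨fun i j => b i (Fin.castAdd m j), ?_, ?_, ?_, ?_, ?_⟩
    · apply IH (w := Set.range fun p : Fin 2 × Fin (n' + m) => b p.1 p.2)
      · rintro x ⟨⟨i, j⟩, rfl⟩
        exact ⟨(i, Fin.castAdd m j), rfl⟩
      · have : n' ≠ 0 := by
          rintro rfl
          rw [Set.range_eq_empty] at hr'
          exact hne.ne_empty (hr' ▸ rfl)
        exact ⟨b 0 (Fin.castAdd m ⟨0, Nat.pos_of_ne_zero this⟩),
          ⟨((0 : Fin 2), (⟨0, Nat.pos_of_ne_zero this⟩ : Fin n')), rfl⟩⟩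
      · exact hP
    · intro i
      have := hbre i
      rw [FirstOrder.Language.Formula.realize_relabel] at this
      exact this
    · exact hbne
    · intro j hj
      exact hbeq _ (fun hc => hj (by
        have := Fin.castAdd_injective n' m hc
        exact this))
    · intro hl0 j
      show b 0 (Fin.castAdd m j) = a' j
      rw [hb0 hl0 (Fin.castAdd m j), hext]
  | limit o ho IH =>
    intro w w' hsub hne h
    rw [rkGe_limit ho] at h ⊢
    exact fun β hβ => IH β hβ hsub hne (h β hβ)

end RankLemmas2
section RankLemmas3

universe v

variable {L : FirstOrder.Language.{v, v}} {M : Type v} [S : L.Structure M]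
  {κ : Cardinal.{v}}

theorem rkGe_succ_imp {β : Ordinal.{v}} {w : Set M} (h : rkGe L M 0 κ (β + 1) w) :
    rkGe L M 0 κ β w := by
  rw [rkGe_succ] at h
  obtain ⟨hfin, hne, hstep⟩ := h
  obtain ⟨m, a, hinj, hr, -⟩ :=
    exists_enum_ext (w' := (∅ : Set M)) hfin (Set.empty_subset w)
      (fun i : Fin 0 => i.elim0) (fun i => i.elim0) (by simp)
  have hm : 0 < 0 + m := by
    rcases Nat.eq_zero_or_pos (0 + m) with h0 | h0
    · exfalso
      have hre : Set.range a = ∅ := by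
        rw [Set.range_eq_empty_iff]
        exact ⟨fun i => absurd i.2 (by omega)⟩
      rw [hr] at hre
      exact hne.ne_empty hre
    · exact h0
  obtain ⟨b, hP, -, -, -, hb0⟩ :=
    hstep (0 + m) a hinj hr ⟨0, hm⟩ ⊤ FirstOrder.Language.BoundedFormula.IsQF.top
      (by rw [FirstOrder.Language.Formula.Realize]
          exact FirstOrder.Language.BoundedFormula.realize_top.mpr trivial)
  apply rkGe_mono β (w := Set.range fun p : Fin 2 × Fin (0 + m) => b p.1 p.2) _ hne hP
  intro x hx
  rw [← hr] at hx
  obtain ⟨i, rfl⟩ := hx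
  refine ⟨((0 : Fin 2), i), ?_⟩
  show b 0 i = a i
  exact hb0 rfl i

theorem rkGe_anti {β γ : Ordinal.{v}} {w : Set M} (hle : β ≤ γ) (h : rkGe L M 0 κ γ w) :
    rkGe L M 0 κ β w := by
  induction γ using Ordinal.limitRecOn generalizing β with
  | zero => rwa [nonpos_iff_eq_zero.mp hle]
  | add_one γ IH =>
    rcases eq_or_lt_of_le hle with rfl | hlt
    · exact h
    · exact IH (by rwa [← Order.lt_add_one_iff]) (rkGe_succ_imp h)
  | limit o ho IH =>
    rcases eq_or_lt_of_le hle with rfl | hlt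
    · exact h
    · exact (rkGe_limit ho w).mp h β hlt

end RankLemmas3
section Pigeonhole

/-- Pigeonhole: a function from ordinals below `ω₁` into a countable type has an
unbounded fiber. -/
theorem exists_unbounded_fiber {C : Type} [Countable C] [Nonempty C]
    (F : Ordinal.{0} → C) :
    ∃ c : C, ∀ β < (Cardinal.aleph 1).ord, ∃ β', β ≤ β' ∧ β' < (Cardinal.aleph 1).ord ∧
      F β' = c := by
  by_contra hcon
  push_neg at hcon
  choose g hg1 hg2 using hcon
  have hsup : (⨆ c, g c) < (Cardinal.aleph 1).ord := by
    apply Ordinal.iSup_lt_ord _ hg1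
    rw [Cardinal.isRegular_aleph_one.cof_eq]
    exact lt_of_le_of_lt Cardinal.mk_le_aleph0 Cardinal.aleph0_lt_aleph_one
  exact hg2 (F (⨆ c, g c)) (⨆ c, g c) (Ordinal.le_iSup g _) hsup rfl

end Pigeonhole
section Model

open FirstOrder FirstOrder.Language

/-- Relation symbols: arity 1 carries `Bool × ℕ` (x-bits and y-bits),
arity 2 carries `ℕ × ℕ` (witness values). -/
def LgRel : ℕ → Type
  | 1 => Bool × ℕ
  | 2 => ℕ × ℕ
  | _ => Empty

instance LgRel.countable : ∀ n, Countable (LgRel n)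
  | 0 => inferInstanceAs (Countable Empty)
  | 1 => inferInstanceAs (Countable (Bool × ℕ))
  | 2 => inferInstanceAs (Countable (ℕ × ℕ))
  | (_ + 3) => inferInstanceAs (Countable Empty)

/-- The language used for the Shelah model. -/
def Lg : FirstOrder.Language.{0, 0} where
  Functions := fun _ => Empty
  Relations := LgRel

instance (l : ℕ) : Countable (Lg.Relations l) := LgRel.countable l

instance (l : ℕ) : IsEmpty (Lg.Functions l) := inferInstanceAs (IsEmpty Empty)

theorem Lg_card_le : Lg.card ≤ ℵ₀ := by
  apply Cardinal.mk_le_aleph0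

variable {M₀ : Type} (xv yv : M₀ → ℕ → Bool) (eta : M₀ → M₀ → ℕ → ℕ)

/-- Interpretation of the relations. -/
def relInterp : ∀ n, LgRel n → (Fin n → M₀) → Prop
  | 1, (b, m), v => cond b (xv (v 0) m) (yv (v 0) m) = true
  | 2, (m, k), v => eta (v 0) (v 1) m = k
  | 0, r, _ => r.elim
  | (_ + 3), r, _ => r.elim

/-- The Shelah model structure. -/
def str : Lg.Structure M₀ where
  funMap := fun f _ => f.elim
  RelMap := fun {n} r v => relInterp xv yv eta n r v

end Model
section Formulas

open FirstOrder FirstOrder.Language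

variable {M₀ : Type} (xv yv : M₀ → ℕ → Bool) (eta : M₀ → M₀ → ℕ → ℕ)

/-- Atomic formula: the `m`-th x-bit of variable `i`. -/
def xbitF {N : ℕ} (i : Fin N) (m : ℕ) : Lg.Formula (Fin N) :=
  Relations.formula₁ ((true, m) : LgRel 1) (Term.var i)

def ybitF {N : ℕ} (i : Fin N) (m : ℕ) : Lg.Formula (Fin N) :=
  Relations.formula₁ ((false, m) : LgRel 1) (Term.var i)

def qatomF {N : ℕ} (i j : Fin N) (m k : ℕ) : Lg.Formula (Fin N) :=
  Relations.formula₂ ((m, k) : LgRel 2) (Term.var i) (Term.var j)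

def neqF {N : ℕ} (i j : Fin N) : Lg.Formula (Fin N) :=
  (Term.equal (Term.var i) (Term.var j)).not

/-- literal fixing the `m`-th x-bit of variable `i` to the value it has at `a`. -/
def xlit {N : ℕ} (a : Fin N → M₀) (i : Fin N) (m : ℕ) : Lg.Formula (Fin N) :=
  if xv (a i) m = true then xbitF i m else (xbitF i m).not

def ylit {N : ℕ} (a : Fin N → M₀) (i : Fin N) (m : ℕ) : Lg.Formula (Fin N) :=
  if yv (a i) m = true then ybitF i m else (ybitF i m).not

theorem realize_xbitF {N : ℕ} (i : Fin N) (m : ℕ) (b : Fin N → M₀) :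
    (@Formula.Realize Lg M₀ (str xv yv eta) _ (xbitF i m) b) ↔ xv (b i) m = true := by
  letI := str xv yv eta
  rw [xbitF]; refine Formula.realize_rel₁.trans ?_
  exact Iff.rfl

theorem realize_ybitF {N : ℕ} (i : Fin N) (m : ℕ) (b : Fin N → M₀) :
    (@Formula.Realize Lg M₀ (str xv yv eta) _ (ybitF i m) b) ↔ yv (b i) m = true := by
  letI := str xv yv eta
  rw [ybitF]; refine Formula.realize_rel₁.trans ?_
  exact Iff.rfl

theorem realize_qatomF {N : ℕ} (i j : Fin N) (m k : ℕ) (b : Fin N → M₀) :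
    (@Formula.Realize Lg M₀ (str xv yv eta) _ (qatomF i j m k) b) ↔ eta (b i) (b j) m = k := by
  letI := str xv yv eta
  rw [qatomF]; refine Formula.realize_rel₂.trans ?_
  exact Iff.rfl

theorem realize_neqF {N : ℕ} (i j : Fin N) (b : Fin N → M₀) :
    (@Formula.Realize Lg M₀ (str xv yv eta) _ (neqF i j) b) ↔ b i ≠ b j := by
  letI := str xv yv eta
  rw [neqF, Formula.realize_not, Formula.realize_equal]
  simp [Term.realize]

theorem realize_xlit {N : ℕ} (a : Fin N → M₀) (i : Fin N) (m : ℕ) (b : Fin N → M₀) :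
    (@Formula.Realize Lg M₀ (str xv yv eta) _ (xlit xv a i m) b) ↔ xv (b i) m = xv (a i) m := by
  rw [xlit]
  by_cases h : xv (a i) m = true
  · rw [if_pos h, realize_xbitF, h]
  · rw [if_neg h]
    letI := str xv yv eta
    rw [Formula.realize_not, realize_xbitF]
    simp only [Bool.not_eq_true] at h ⊢
    rw [h]
theorem realize_ylit {N : ℕ} (a : Fin N → M₀) (i : Fin N) (m : ℕ) (b : Fin N → M₀) :
    (@Formula.Realize Lg M₀ (str xv yv eta) _ (ylit yv a i m) b) ↔ yv (b i) m = yv (a i) m := by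
  rw [ylit]
  by_cases h : yv (a i) m = true
  · rw [if_pos h, realize_ybitF, h]
  · rw [if_neg h]
    letI := str xv yv eta
    rw [Formula.realize_not, realize_ybitF]
    simp only [Bool.not_eq_true] at h ⊢
    rw [h]

theorem isQF_xbitF {N : ℕ} (i : Fin N) (m : ℕ) : (xbitF i m : Lg.Formula (Fin N)).IsQF :=
  (BoundedFormula.IsAtomic.rel _ _).isQF

theorem isQF_ybitF {N : ℕ} (i : Fin N) (m : ℕ) : (ybitF i m : Lg.Formula (Fin N)).IsQF :=
  (BoundedFormula.IsAtomic.rel _ _).isQF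

theorem isQF_qatomF {N : ℕ} (i j : Fin N) (m k : ℕ) :
    (qatomF i j m k : Lg.Formula (Fin N)).IsQF :=
  (BoundedFormula.IsAtomic.rel _ _).isQF

theorem isQF_neqF {N : ℕ} (i j : Fin N) : (neqF i j : Lg.Formula (Fin N)).IsQF :=
  (BoundedFormula.IsAtomic.equal _ _).isQF.not

theorem isQF_xlit {N : ℕ} (a : Fin N → M₀) (i : Fin N) (m : ℕ) :
    (xlit xv a i m).IsQF := by
  rw [xlit]; split
  · exact isQF_xbitF i m
  · exact (isQF_xbitF i m).not

theorem isQF_ylit {N : ℕ} (a : Fin N → M₀) (i : Fin N) (m : ℕ) :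
    (ylit yv a i m).IsQF := by
  rw [ylit]; split
  · exact isQF_ybitF i m
  · exact (isQF_ybitF i m).not

/-- The quantifier-free diagram of the tuple `a` up to level `lvl`. -/
def diagList {N : ℕ} (a : Fin N → M₀) (lvl : ℕ) : List (Lg.Formula (Fin N)) :=
  ((List.finRange N).flatMap fun i => (List.range lvl).flatMap fun m =>
      [xlit xv a i m, ylit yv a i m])
  ++ ((List.finRange N).flatMap fun i => (List.finRange N).flatMap fun j =>
      (List.range lvl).map fun m => qatomF i j m (eta (a i) (a j) m))
  ++ ((List.finRange N).flatMap fun i => (List.finRange N).filterMap fun j =>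
      if i = j then none else some (neqF i j))

def diagF {N : ℕ} (a : Fin N → M₀) (lvl : ℕ) : Lg.Formula (Fin N) :=
  (diagList xv yv eta a lvl).foldr (· ⊓ ·) ⊤

theorem isQF_diagF {N : ℕ} (a : Fin N → M₀) (lvl : ℕ) : (diagF xv yv eta a lvl).IsQF := by
  have : ∀ φ ∈ diagList xv yv eta a lvl, BoundedFormula.IsQF φ := by
    intro φ hφ
    rw [diagList] at hφ
    simp only [List.mem_append, List.mem_flatMap, List.mem_range, List.mem_finRange,
      List.mem_map, List.mem_filterMap, List.mem_cons, List.mem_singleton,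
      true_and] at hφ
    rcases hφ with (⟨i, m, hm, h⟩ | ⟨i, j, m, hm, rfl⟩) | ⟨i, j, h⟩
    · rcases h with rfl | rfl | h
      · exact isQF_xlit xv a i m
      · exact isQF_ylit yv a i m
      · exact absurd h List.not_mem_nil
    · exact isQF_qatomF i j m _
    · split at h
      · exact absurd h (by simp)
      · rw [Option.some_inj] at h
        rw [← h]
        exact isQF_neqF i j
  rw [diagF]
  generalize diagList xv yv eta a lvl = L' at this
  induction L' with
  | nil => exact BoundedFormula.IsQF.top
  | cons φ rest IH =>
      exact ((this φ (by simp)).inf (IH (fun ψ hψ => this ψ (by simp [hψ]))))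

theorem realize_diagF {N : ℕ} (a : Fin N → M₀) (lvl : ℕ) (b : Fin N → M₀) :
    (@Formula.Realize Lg M₀ (str xv yv eta) _ (diagF xv yv eta a lvl) b) ↔
      ∀ φ ∈ diagList xv yv eta a lvl, @Formula.Realize Lg M₀ (str xv yv eta) _ φ b := by
  letI := str xv yv eta
  rw [diagF, Formula.Realize]
  exact BoundedFormula.realize_foldr_inf _ _ _
theorem realize_diagF_self {N : ℕ} (a : Fin N → M₀) (lvl : ℕ)
    (hinj : Function.Injective a) :
    @Formula.Realize Lg M₀ (str xv yv eta) _ (diagF xv yv eta a lvl) a := by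
  rw [realize_diagF]
  intro φ hφ
  rw [diagList] at hφ
  simp only [List.mem_append, List.mem_flatMap, List.mem_range, List.mem_finRange,
    List.mem_map, List.mem_filterMap, List.mem_cons, List.mem_singleton, true_and] at hφ
  rcases hφ with (⟨i, m, hm, h⟩ | ⟨i, j, m, hm, rfl⟩) | ⟨i, j, h⟩
  · rcases h with rfl | rfl | h
    · rw [realize_xlit]
    · rw [realize_ylit]
    · exact absurd h List.not_mem_nil
  · rw [realize_qatomF]
  · rcases Decidable.em (i = j) with hij | hij
    · rw [if_pos hij] at h; exact absurd h (by simp)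
    · rw [if_neg hij, Option.some_inj] at h
      rw [← h, realize_neqF]
      exact fun hc => hij (hinj hc)

theorem diagF_extract {N : ℕ} (a : Fin N → M₀) (lvl : ℕ) (b : Fin N → M₀)
    (h : @Formula.Realize Lg M₀ (str xv yv eta) _ (diagF xv yv eta a lvl) b) :
    (∀ i : Fin N, ∀ m < lvl, xv (b i) m = xv (a i) m ∧ yv (b i) m = yv (a i) m) ∧
    (∀ i j : Fin N, ∀ m < lvl, eta (b i) (b j) m = eta (a i) (a j) m) ∧
    (∀ i j : Fin N, i ≠ j → b i ≠ b j) := by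
  rw [realize_diagF] at h
  refine ⟨fun i m hm => ⟨?_, ?_⟩, fun i j m hm => ?_, fun i j hij => ?_⟩
  · have := h (xlit xv a i m) (by
      rw [diagList]
      simp only [List.mem_append, List.mem_flatMap, List.mem_range, List.mem_finRange,
        List.mem_cons, List.mem_singleton, true_and]
      exact Or.inl (Or.inl ⟨i, m, hm, Or.inl rfl⟩))
    rwa [realize_xlit] at this
  · have := h (ylit yv a i m) (by
      rw [diagList]
      simp only [List.mem_append, List.mem_flatMap, List.mem_range, List.mem_finRange,
        List.mem_cons, List.mem_singleton, true_and]
      exact Or.inl (Or.inl ⟨i, m, hm, Or.inr (Or.inl rfl)⟩))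
    rwa [realize_ylit] at this
  · have := h (qatomF i j m (eta (a i) (a j) m)) (by
      rw [diagList]
      simp only [List.mem_append, List.mem_flatMap, List.mem_range, List.mem_finRange,
        List.mem_map, true_and]
      exact Or.inl (Or.inr ⟨i, j, m, hm, rfl⟩))
    rwa [realize_qatomF] at this
  · have := h (neqF i j) (by
      rw [diagList]
      simp only [List.mem_append, List.mem_flatMap, List.mem_finRange, List.mem_filterMap,
        true_and]
      exact Or.inr ⟨i, j, by rw [if_neg hij]⟩)
    rwa [realize_neqF] at this
theorem singleSplit {I : Type} [Fintype I] (a : I → M₀) (hinj : Function.Injective a)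
    {β : Ordinal.{0}} {κ : Cardinal.{0}}
    (hrk : @rkGe Lg M₀ (str xv yv eta) 0 κ (β + 1) (Set.range a)) (k : I) (lvl : ℕ) :
    ∃ c : M₀, (∀ j, c ≠ a j) ∧
      @rkGe Lg M₀ (str xv yv eta) 0 κ β (Set.range a ∪ {c}) ∧
      (∀ m < lvl, xv c m = xv (a k) m ∧ yv c m = yv (a k) m) ∧
      (∀ j, j ≠ k → ∀ m < lvl,
        eta c (a j) m = eta (a k) (a j) m ∧ eta (a j) c m = eta (a j) (a k) m) := by
  letI := str xv yv eta
  set e := Fintype.equivFin I with he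
  set a' : Fin (Fintype.card I) → M₀ := a ∘ e.symm with ha'
  have hinj' : Function.Injective a' := hinj.comp e.symm.injective
  have hr' : Set.range a' = Set.range a := e.symm.surjective.range_comp a
  rw [rkGe_succ] at hrk
  obtain ⟨b, hP, hbre, hbne, hbeq, hb0⟩ := hrk.2.2 (Fintype.card I) a' hinj' hr' (e k)
    (diagF xv yv eta a' lvl) (isQF_diagF xv yv eta a' lvl)
    (realize_diagF_self xv yv eta a' lvl hinj')
  have hb0' : ∀ j, b 0 j = a' j := hb0 rfl
  obtain ⟨hbit, heta, hneq⟩ := diagF_extract xv yv eta a' lvl (b 1) (hbre 1)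
  set c : M₀ := b 1 (e k) with hc
  have hb1 : ∀ j, j ≠ e k → b 1 j = a' j := by
    intro j hj
    rw [← hbeq j hj, hb0' j]
  have haek : a' (e k) = a k := by rw [ha']; simp
  have hrange : (Set.range fun p : Fin 2 × Fin (Fintype.card I) => b p.1 p.2)
      = Set.range a ∪ {c} := by
    apply Set.eq_of_subset_of_subset
    · rintro x ⟨⟨i, j⟩, rfl⟩
      have h01 : i = 0 ∨ i = 1 := by omega
      show b i j ∈ _
      rcases h01 with rfl | rfl
      · rw [hb0' j]
        exact Or.inl (hr' ▸ Set.mem_range_self j)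
      · rcases eq_or_ne j (e k) with rfl | hj
        · exact Or.inr rfl
        · rw [hb1 j hj]
          exact Or.inl (hr' ▸ Set.mem_range_self j)
    · rintro x (⟨j, rfl⟩ | rfl)
      · exact ⟨((0 : Fin 2), e j), by show b 0 (e j) = a j; rw [hb0', ha']; simp⟩
      · exact ⟨((1 : Fin 2), e k), rfl⟩
  refine ⟨c, ?_, hrange ▸ hP, ?_, ?_⟩
  · intro j
    rcases eq_or_ne j k with rfl | hj
    · intro hcontra
      apply hbne
      rw [hb0' (e j), haek, ← hcontra]
    · intro hcontra
      have hje : e j ≠ e k := fun hje => hj (e.injective hje)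
      refine hneq (e k) (e j) hje.symm ?_
      rw [hb1 (e j) hje, ← hc, hcontra, ha']
      simp
  · intro m hm
    have := hbit (e k) m hm
    rwa [haek] at this
  · intro j hj m hm
    have hje : e j ≠ e k := fun hje => hj (e.injective hje)
    have h1 := heta (e k) (e j) m hm
    have h2 := heta (e j) (e k) m hm
    rw [hb1 (e j) hje, haek] at h1 h2
    have haj : a' (e j) = a j := by rw [ha']; simp
    rw [haj] at h1 h2
    exact ⟨h1, h2⟩
theorem multiSplit {κ : Cardinal.{0}} :
    ∀ (k : ℕ) {I : Type} [Fintype I] (a : I → M₀), Function.Injective a →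
    ∀ {β : Ordinal.{0}},
      @rkGe Lg M₀ (str xv yv eta) 0 κ (β + k) (Set.range a) →
    ∀ (lvl : ℕ) (tgt : Fin k → I), Function.Injective tgt →
    ∃ c : Fin k → M₀, Function.Injective c ∧ (∀ i j, c i ≠ a j) ∧
      @rkGe Lg M₀ (str xv yv eta) 0 κ β (Set.range a ∪ Set.range c) ∧
      (∀ i, ∀ m < lvl, xv (c i) m = xv (a (tgt i)) m ∧ yv (c i) m = yv (a (tgt i)) m) ∧
      (∀ i j, j ≠ tgt i → ∀ m < lvl,
        eta (c i) (a j) m = eta (a (tgt i)) (a j) m ∧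
        eta (a j) (c i) m = eta (a j) (a (tgt i)) m) ∧
      (∀ i i', tgt i ≠ tgt i' → ∀ m < lvl,
        eta (c i) (c i') m = eta (a (tgt i)) (a (tgt i')) m) := by
  intro k
  induction k with
  | zero =>
    intro I _ a hinj β hrk lvl tgt htgt
    refine ⟨Fin.elim0, fun i => i.elim0, fun i => i.elim0, ?_, fun i => i.elim0,
      fun i => i.elim0, fun i => i.elim0⟩
    rw [Set.range_eq_empty (Fin.elim0 : Fin 0 → M₀), Set.union_empty]
    rwa [Nat.cast_zero, add_zero] at hrk
  | succ k IH =>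
    intro I _ a hinj β hrk lvl tgt htgt
    have hrk' : @rkGe Lg M₀ (str xv yv eta) 0 κ ((β + k) + 1) (Set.range a) := by
      rwa [Nat.cast_succ, ← add_assoc] at hrk
    obtain ⟨c₀, hc₀ne, hc₀rk, hc₀bit, hc₀eta⟩ :=
      singleSplit xv yv eta a hinj hrk' (tgt 0) lvl
    set a2 : Option I → M₀ := fun o => o.elim c₀ a with ha2
    have ha2n : a2 none = c₀ := rfl
    have ha2s : ∀ i, a2 (some i) = a i := fun i => rfl
    have hinj2 : Function.Injective a2 := by
      rintro (_ | i) (_ | j) hij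
      · rfl
      · exact absurd hij (hc₀ne j)
      · exact absurd hij.symm (hc₀ne i)
      · rw [ha2s, ha2s] at hij
        rw [hinj hij]
    have hr2 : Set.range a2 = Set.range a ∪ {c₀} := by
      apply Set.eq_of_subset_of_subset
      · rintro x ⟨(_ | i), rfl⟩
        · exact Or.inr rfl
        · exact Or.inl ⟨i, rfl⟩
      · rintro x (⟨i, rfl⟩ | rfl)
        · exact ⟨some i, rfl⟩
        · exact ⟨none, rfl⟩
    have hrk2 : @rkGe Lg M₀ (str xv yv eta) 0 κ (β + k) (Set.range a2) := by
      rwa [hr2]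
    set tgt2 : Fin k → Option I := fun i => some (tgt i.succ) with htgt2def
    have htgt2 : Function.Injective tgt2 := by
      intro i j hij
      rw [htgt2def] at hij
      have := htgt (Option.some_injective _ hij)
      exact Fin.succ_injective _ this
    obtain ⟨c', hc'inj, hc'ne, hc'rk, hc'bit, hc'eta, hc'cc⟩ :=
      IH a2 hinj2 hrk2 lvl tgt2 htgt2
    set c : Fin (k + 1) → M₀ := Fin.cases c₀ c' with hcdef
    have hc0 : c 0 = c₀ := rfl
    have hcs : ∀ i : Fin k, c i.succ = c' i := fun i => by
      rw [hcdef]; exact Fin.cases_succ _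
    have hrangec : Set.range c = {c₀} ∪ Set.range c' := by
      apply Set.eq_of_subset_of_subset
      · rintro x ⟨i, rfl⟩
        induction i using Fin.cases with
        | zero => exact Or.inl rfl
        | succ i => rw [hcs]; exact Or.inr ⟨i, rfl⟩
      · rintro x (rfl | ⟨i, rfl⟩)
        · exact ⟨0, rfl⟩
        · exact ⟨i.succ, hcs i⟩
    refine ⟨c, ?_, ?_, ?_, ?_, ?_, ?_⟩
    · -- injectivity of c
      intro i j hij
      induction i using Fin.cases with
      | zero =>
        induction j using Fin.cases with
        | zero => rfl
        | succ j =>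
          rw [hc0, hcs] at hij
          exact absurd hij.symm (by rw [← ha2n]; exact hc'ne j none)
      | succ i =>
        induction j using Fin.cases with
        | zero =>
          rw [hc0, hcs] at hij
          exact absurd hij (by rw [← ha2n]; exact hc'ne i none)
        | succ j =>
          rw [hcs, hcs] at hij
          rw [hc'inj hij]
    · -- c i ≠ a j
      intro i j
      induction i using Fin.cases with
      | zero => rw [hc0]; exact hc₀ne j
      | succ i => rw [hcs]; rw [← ha2s j]; exact hc'ne i (some j)
    · -- rank
      have : Set.range a ∪ Set.range c = Set.range a2 ∪ Set.range c' := by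
        rw [hr2, hrangec]
        rw [Set.union_assoc]
      rwa [this]
    · -- bits
      intro i m hm
      induction i using Fin.cases with
      | zero => rw [hc0]; exact hc₀bit m hm
      | succ i =>
        rw [hcs]
        have := hc'bit i m hm
        rwa [ha2s] at this
    · -- eta with old elements
      intro i j hj m hm
      induction i using Fin.cases with
      | zero => rw [hc0]; exact hc₀eta j hj m hm
      | succ i =>
        rw [hcs]
        have := hc'eta i (some j) (fun hc => hj (by
          rw [htgt2def] at hc
          exact Option.some_injective _ hc)) m hm
        rwa [ha2s, ha2s] at this
    · -- eta between new elements
      intro i i' hii m hm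
      induction i using Fin.cases with
      | zero =>
        induction i' using Fin.cases with
        | zero => exact absurd rfl hii
        | succ i' =>
          rw [hc0, hcs]
          have h1 := (hc'eta i' none (by simp [htgt2def]) m hm).2
          rw [ha2n, ha2s] at h1
          have h2 := (hc₀eta (tgt i'.succ) (fun hcc => hii hcc.symm) m hm).1
          rw [h1, h2]
      | succ i =>
        induction i' using Fin.cases with
        | zero =>
          rw [hc0, hcs]
          have h1 := (hc'eta i none (by simp [htgt2def]) m hm).1
          rw [ha2n, ha2s] at h1
          have h2 := (hc₀eta (tgt i.succ) (fun hcc => hii hcc) m hm).2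
          rw [h1, h2]
        | succ i' =>
          rw [hcs, hcs]
          have := hc'cc i i' (by
            rw [htgt2def]
            intro hcc
            exact hii (congrArg _ (htgt (Option.some_injective _ hcc)))) m hm
          rwa [ha2s, ha2s] at this
end Formulas
/-- Finite combinatorial data describing level-`n` of the construction. -/
structure CData (n : ℕ) where
  l : ℕ
  σ : (Fin n → Bool) → Fin l → Bool
  τ : (Fin n → Bool) → Fin l → Bool
  e : (Fin n → Bool) → (Fin n → Bool) → Fin l → ℕ

instance CData.instNonempty (n : ℕ) : Nonempty (CData n) :=
  ⟨⟨0, fun _ => Fin.elim0, fun _ => Fin.elim0, fun _ _ => Fin.elim0⟩⟩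

instance CData.instCountable (n : ℕ) : Countable (CData n) := by
  have hinj : Function.Injective (fun d : CData n =>
      (⟨d.l, d.σ, d.τ, d.e⟩ : Σ l : ℕ,
        (((Fin n → Bool) → Fin l → Bool) × ((Fin n → Bool) → Fin l → Bool) ×
          ((Fin n → Bool) → (Fin n → Bool) → Fin l → ℕ)))) := by
    rintro ⟨l1, s1, t1, e1⟩ ⟨l2, s2, t2, e2⟩ h
    obtain ⟨h1, h2⟩ := Sigma.ext_iff.mp h
    dsimp only at h1 h2
    subst h1
    rw [heq_iff_eq] at h2
    obtain ⟨hs, hte⟩ := Prod.ext_iff.mp h2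
    obtain ⟨ht, he⟩ := Prod.ext_iff.mp hte
    dsimp only at hs ht he
    subst hs
    subst ht
    subst he
    rfl
  exact hinj.countable

/-- Coherence between consecutive levels, including the splitting requirement. -/
structure CExtends {n : ℕ} (D : CData n) (D' : CData (n + 1)) : Prop where
  hl : D.l < D'.l
  hσ : ∀ s' m (hm : m < D.l), D'.σ s' ⟨m, lt_trans hm hl⟩ = D.σ (Fin.init s') ⟨m, hm⟩
  hτ : ∀ t' m (hm : m < D.l), D'.τ t' ⟨m, lt_trans hm hl⟩ = D.τ (Fin.init t') ⟨m, hm⟩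
  he : ∀ s' t' m (hm : m < D.l),
    D'.e s' t' ⟨m, lt_trans hm hl⟩ = D.e (Fin.init s') (Fin.init t') ⟨m, hm⟩
  hsσ : ∀ s : Fin n → Bool,
    ∃ m : Fin D'.l, D'.σ (Fin.snoc s false) m ≠ D'.σ (Fin.snoc s true) m
  hsτ : ∀ t : Fin n → Bool,
    ∃ m : Fin D'.l, D'.τ (Fin.snoc t false) m ≠ D'.τ (Fin.snoc t true) m
section Construction

open FirstOrder FirstOrder.Language

variable {M₀ : Type} (xv yv : M₀ → ℕ → Bool) (eta : M₀ → M₀ → ℕ → ℕ)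

/-- A configuration realizing the data `D` with rank at least `β`. -/
def GoodCfg {n : ℕ} (D : CData n) (β : Ordinal.{0}) : Prop :=
  ∃ R : Bool × (Fin n → Bool) → M₀, Function.Injective R ∧
    @rkGe Lg M₀ (str xv yv eta) 0 (Cardinal.aleph 1) β (Set.range R) ∧
    (∀ s m (hm : m < D.l), xv (R (false, s)) m = D.σ s ⟨m, hm⟩) ∧
    (∀ t m (hm : m < D.l), yv (R (true, t)) m = D.τ t ⟨m, hm⟩) ∧
    (∀ s t m (hm : m < D.l), eta (R (false, s)) (R (true, t)) m = D.e s t ⟨m, hm⟩)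

def Good {n : ℕ} (D : CData n) : Prop :=
  ∀ β < (Cardinal.aleph 1).ord, GoodCfg xv yv eta D β

theorem aleph_one_ord_isLimit : Order.IsSuccLimit ((Cardinal.aleph 1).ord) :=
  Cardinal.isSuccLimit_ord (Cardinal.aleph0_le_aleph 1)

theorem add_nat_lt_aleph_one_ord {β : Ordinal.{0}} (hβ : β < (Cardinal.aleph 1).ord)
    (k : ℕ) : β + k < (Cardinal.aleph 1).ord := by
  induction k with
  | zero => rwa [Nat.cast_zero, add_zero]
  | succ k IH =>
    rw [Nat.cast_succ, ← add_assoc, Ordinal.add_one_eq_succ]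
    exact aleph_one_ord_isLimit.succ_lt IH

theorem good_base
    (hR : ∀ β < (Cardinal.aleph 1).ord, ∃ w : Set M₀, w.Finite ∧ w.Nonempty ∧
      @rkGe Lg M₀ (str xv yv eta) 0 (Cardinal.aleph 1) β w) :
    Good xv yv eta (⟨0, fun _ => Fin.elim0, fun _ => Fin.elim0, fun _ _ => Fin.elim0⟩ :
      CData 0) := by
  letI := str xv yv eta
  intro β hβ
  have hβ1 : β + 1 < (Cardinal.aleph 1).ord := by
    have := add_nat_lt_aleph_one_ord hβ 1
    rwa [Nat.cast_one] at this
  obtain ⟨w, hwfin, hwne, hwrk⟩ := hR (β + 1) hβ1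
  obtain ⟨α, hα⟩ := hwne
  have h1 : @rkGe Lg M₀ (str xv yv eta) 0 (Cardinal.aleph 1) (β + 1)
      (Set.range (fun _ : Unit => α)) := by
    rw [Set.range_const]
    exact rkGe_mono _ (Set.singleton_subset_iff.mpr hα) ⟨α, rfl⟩ hwrk
  obtain ⟨c, hcne, hcrk, -, -⟩ := singleSplit xv yv eta (fun _ : Unit => α)
    (fun _ _ _ => Subsingleton.elim _ _) h1 () 0
  refine ⟨fun p => cond p.1 c α, ?_, ?_, ?_, ?_, ?_⟩
  · rintro ⟨b1, s1⟩ ⟨b2, s2⟩ h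
    dsimp at h
    have hs : s1 = s2 := Subsingleton.elim _ _
    subst hs
    cases b1 <;> cases b2
    · rfl
    · exact absurd h.symm (hcne ())
    · exact absurd h (hcne ())
    · rfl
  · apply rkGe_mono _ _ _ hcrk
    · rintro x ⟨⟨b, s⟩, rfl⟩
      cases b
      · exact Or.inl ⟨(), rfl⟩
      · exact Or.inr rfl
    · exact ⟨α, ⟨(false, fun i => i.elim0), rfl⟩⟩
  · intro s m hm; exact absurd hm (Nat.not_lt_zero m)
  · intro t m hm; exact absurd hm (Nat.not_lt_zero m)
  · intro s t m hm; exact absurd hm (Nat.not_lt_zero m)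

end Construction
section StepLemma

open FirstOrder FirstOrder.Language

variable {M₀ : Type} (xv yv : M₀ → ℕ → Bool) (eta : M₀ → M₀ → ℕ → ℕ)

theorem good_cfg_step (hxv : Function.Injective xv) (hyv : Function.Injective yv)
    {n : ℕ} (D : CData n) (hD : Good xv yv eta D) {β : Ordinal.{0}}
    (hβ : β < (Cardinal.aleph 1).ord) :
    ∃ D' : CData (n + 1), CExtends D D' ∧ GoodCfg xv yv eta D' β := by
  classical
  letI := str xv yv eta
  set I := Bool × (Fin n → Bool) with hI
  set K := Fintype.card I with hK
  set eI := Fintype.equivFin I with heI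
  obtain ⟨R, hRinj, hRrk, hσR, hτR, heR⟩ := hD (β + K) (add_nat_lt_aleph_one_ord hβ K)
  obtain ⟨c, hcinj, hcneR, hcrk, hcbit, hceta, hccc⟩ :=
    multiSplit xv yv eta K R hRinj hRrk D.l eI.symm eI.symm.injective
  set c' : I → M₀ := c ∘ eI with hc'
  have htgt : ∀ i : I, eI.symm (eI i) = i := fun i => eI.symm_apply_apply i
  have hc'neR : ∀ i j : I, c' i ≠ R j := fun i j => hcneR (eI i) j
  have hc'inj : Function.Injective c' := hcinj.comp eI.injective
  have hc'bit : ∀ i : I, ∀ m < D.l, xv (c' i) m = xv (R i) m ∧ yv (c' i) m = yv (R i) m := by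
    intro i m hm
    have := hcbit (eI i) m hm
    rwa [htgt i] at this
  have hc'eta : ∀ i j : I, j ≠ i → ∀ m < D.l,
      eta (c' i) (R j) m = eta (R i) (R j) m ∧ eta (R j) (c' i) m = eta (R j) (R i) m := by
    intro i j hij m hm
    have := hceta (eI i) j (by rwa [htgt i]) m hm
    rwa [htgt i] at this
  have hc'cc : ∀ i i' : I, i ≠ i' → ∀ m < D.l,
      eta (c' i) (c' i') m = eta (R i) (R i') m := by
    intro i i' hii m hm
    have := hccc (eI i) (eI i') (by rw [htgt i, htgt i']; exact hii) m hm
    rwa [htgt i, htgt i'] at this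
  set R' : Bool × (Fin (n + 1) → Bool) → M₀ :=
    fun p => cond (p.2 (Fin.last n)) (c' (p.1, Fin.init p.2)) (R (p.1, Fin.init p.2)) with hR'
  have hR'f : ∀ bb (s' : Fin (n + 1) → Bool), s' (Fin.last n) = false →
      R' (bb, s') = R (bb, Fin.init s') := by
    intro bb s' h
    rw [hR']; dsimp only; rw [h]; rfl
  have hR't : ∀ bb (s' : Fin (n + 1) → Bool), s' (Fin.last n) = true →
      R' (bb, s') = c' (bb, Fin.init s') := by
    intro bb s' h
    rw [hR']; dsimp only; rw [h]; rfl
  have hR'inj : Function.Injective R' := by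
    rintro ⟨b1, s1⟩ ⟨b2, s2⟩ h
    have hs1 := Fin.snoc_init_self s1
    have hs2 := Fin.snoc_init_self s2
    cases hb1 : s1 (Fin.last n) <;> cases hb2 : s2 (Fin.last n)
    · rw [hR'f b1 s1 hb1, hR'f b2 s2 hb2] at h
      have := hRinj h
      rw [Prod.ext_iff] at this
      obtain ⟨hbb, hinit⟩ := this
      refine Prod.ext hbb ?_
      rw [← hs1, ← hs2, hb1, hb2]
      dsimp only at hinit
      rw [hinit]
    · rw [hR'f b1 s1 hb1, hR't b2 s2 hb2] at h
      exact absurd h.symm (hc'neR _ _)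
    · rw [hR't b1 s1 hb1, hR'f b2 s2 hb2] at h
      exact absurd h (hc'neR _ _)
    · rw [hR't b1 s1 hb1, hR't b2 s2 hb2] at h
      have := hc'inj h
      rw [Prod.ext_iff] at this
      obtain ⟨hbb, hinit⟩ := this
      refine Prod.ext hbb ?_
      rw [← hs1, ← hs2, hb1, hb2]
      dsimp only at hinit
      rw [hinit]
  -- difference levels
  have hdx : ∀ s : Fin n → Bool, ∃ m, xv (R (false, s)) m ≠ xv (c' (false, s)) m := by
    intro s
    rw [← Function.ne_iff]
    intro hEq
    exact hc'neR (false, s) (false, s) (hxv hEq).symm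
  have hdy : ∀ t : Fin n → Bool, ∃ m, yv (R (true, t)) m ≠ yv (c' (true, t)) m := by
    intro t
    rw [← Function.ne_iff]
    intro hEq
    exact hc'neR (true, t) (true, t) (hyv hEq).symm
  set d1 : (Fin n → Bool) → ℕ := fun s => (hdx s).choose with hd1def
  set d2 : (Fin n → Bool) → ℕ := fun t => (hdy t).choose with hd2def
  set lmax := Finset.univ.sup (fun s : Fin n → Bool => max (d1 s) (d2 s)) with hlmax
  set l' := max (D.l + 1) (lmax + 1) with hl'
  have hDl : D.l < l' := lt_of_lt_of_le (Nat.lt_succ_self _) (le_max_left _ _)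
  have hd1lt : ∀ s, d1 s < l' := by
    intro s
    have h1 : d1 s ≤ lmax := le_trans (le_max_left _ _)
      (Finset.le_sup (f := fun s : Fin n → Bool => max (d1 s) (d2 s)) (Finset.mem_univ s))
    exact lt_of_le_of_lt h1 (lt_of_lt_of_le (Nat.lt_succ_self _) (le_max_right _ _))
  have hd2lt : ∀ t, d2 t < l' := by
    intro t
    have h1 : d2 t ≤ lmax := le_trans (le_max_right _ _)
      (Finset.le_sup (f := fun s : Fin n → Bool => max (d1 s) (d2 s)) (Finset.mem_univ t))
    exact lt_of_le_of_lt h1 (lt_of_lt_of_le (Nat.lt_succ_self _) (le_max_right _ _))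
  -- the new data
  refine ⟨⟨l', fun s' m => xv (R' (false, s')) m.1, fun t' m => yv (R' (true, t')) m.1,
    fun s' t' m => eta (R' (false, s')) (R' (true, t')) m.1⟩, ?_, ?_⟩
  · refine ⟨hDl, ?_, ?_, ?_, ?_, ?_⟩
    · -- hσ
      intro s' m hm
      show xv (R' (false, s')) m = D.σ (Fin.init s') ⟨m, hm⟩
      cases hb : s' (Fin.last n)
      · rw [hR'f false s' hb]
        exact hσR (Fin.init s') m hm
      · rw [hR't false s' hb, (hc'bit (false, Fin.init s') m hm).1]
        exact hσR (Fin.init s') m hm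
    · -- hτ
      intro t' m hm
      show yv (R' (true, t')) m = D.τ (Fin.init t') ⟨m, hm⟩
      cases hb : t' (Fin.last n)
      · rw [hR'f true t' hb]
        exact hτR (Fin.init t') m hm
      · rw [hR't true t' hb, (hc'bit (true, Fin.init t') m hm).2]
        exact hτR (Fin.init t') m hm
    · -- he
      intro s' t' m hm
      show eta (R' (false, s')) (R' (true, t')) m = D.e (Fin.init s') (Fin.init t') ⟨m, hm⟩
      have hne1 : ((true, Fin.init t') : I) ≠ (false, Fin.init s') := by
        intro hcc; exact Bool.noConfusion (congrArg Prod.fst hcc)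
      have hne2 : ((false, Fin.init s') : I) ≠ (true, Fin.init t') := by
        intro hcc; exact Bool.noConfusion (congrArg Prod.fst hcc)
      cases hb1 : s' (Fin.last n) <;> cases hb2 : t' (Fin.last n)
      · rw [hR'f false s' hb1, hR'f true t' hb2]
        exact heR (Fin.init s') (Fin.init t') m hm
      · rw [hR'f false s' hb1, hR't true t' hb2,
          (hc'eta (true, Fin.init t') (false, Fin.init s') hne2 m hm).2]
        exact heR (Fin.init s') (Fin.init t') m hm
      · rw [hR't false s' hb1, hR'f true t' hb2,
          (hc'eta (false, Fin.init s') (true, Fin.init t') hne1 m hm).1]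
        exact heR (Fin.init s') (Fin.init t') m hm
      · rw [hR't false s' hb1, hR't true t' hb2,
          hc'cc (false, Fin.init s') (true, Fin.init t') hne2 m hm]
        exact heR (Fin.init s') (Fin.init t') m hm
    · -- splitting in σ
      intro s
      refine ⟨⟨d1 s, hd1lt s⟩, ?_⟩
      show xv (R' (false, Fin.snoc s false)) (d1 s) ≠ xv (R' (false, Fin.snoc s true)) (d1 s)
      rw [hR'f false _ (Fin.snoc_last _ _), hR't false _ (Fin.snoc_last _ _),
        Fin.init_snoc, Fin.init_snoc]
      exact (hdx s).choose_spec
    · -- splitting in τ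
      intro t
      refine ⟨⟨d2 t, hd2lt t⟩, ?_⟩
      show yv (R' (true, Fin.snoc t false)) (d2 t) ≠ yv (R' (true, Fin.snoc t true)) (d2 t)
      rw [hR'f true _ (Fin.snoc_last _ _), hR't true _ (Fin.snoc_last _ _),
        Fin.init_snoc, Fin.init_snoc]
      exact (hdy t).choose_spec
  · -- GoodCfg
    refine ⟨R', hR'inj, ?_, fun s m hm => rfl, fun t m hm => rfl, fun s t m hm => rfl⟩
    apply rkGe_mono _ _ _ hcrk
    · rintro x ⟨⟨bb, s'⟩, rfl⟩
      cases hb : s' (Fin.last n)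
      · rw [hR'f bb s' hb]
        exact Or.inl (Set.mem_range_self _)
      · rw [hR't bb s' hb]
        exact Or.inr ⟨eI (bb, Fin.init s'), rfl⟩
    · exact ⟨R' (false, fun _ => false), Set.mem_range_self _⟩

end StepLemma
section Sequence

open FirstOrder FirstOrder.Language

variable {M₀ : Type} (xv yv : M₀ → ℕ → Bool) (eta : M₀ → M₀ → ℕ → ℕ)

theorem good_step (hxv : Function.Injective xv) (hyv : Function.Injective yv)
    {n : ℕ} (D : CData n) (hD : Good xv yv eta D) :
    ∃ D' : CData (n + 1), CExtends D D' ∧ Good xv yv eta D' := by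
  classical
  letI := str xv yv eta
  have hstep : ∀ β : Ordinal.{0}, β < (Cardinal.aleph 1).ord →
      ∃ D' : CData (n + 1), CExtends D D' ∧ GoodCfg xv yv eta D' β :=
    fun β hβ => good_cfg_step xv yv eta hxv hyv D hD hβ
  set F : Ordinal.{0} → CData (n + 1) := fun β =>
    if h : β < (Cardinal.aleph 1).ord then (hstep β h).choose else Classical.arbitrary _
    with hF
  obtain ⟨D', hD'⟩ := exists_unbounded_fiber F
  have hΛ0 : (0 : Ordinal.{0}) < (Cardinal.aleph 1).ord := by
    rw [Cardinal.lt_ord]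
    simpa using lt_of_lt_of_le Cardinal.aleph0_pos (Cardinal.aleph0_le_aleph 1)
  refine ⟨D', ?_, ?_⟩
  · obtain ⟨β', hβ'le, hβ'lt, hβ'eq⟩ := hD' 0 hΛ0
    have : F β' = (hstep β' hβ'lt).choose := by
      simp only [hF]
      rw [dif_pos hβ'lt]
    rw [this] at hβ'eq
    exact hβ'eq ▸ (hstep β' hβ'lt).choose_spec.1
  · intro β hβ
    obtain ⟨β', hβ'le, hβ'lt, hβ'eq⟩ := hD' β hβ
    have : F β' = (hstep β' hβ'lt).choose := by
      simp only [hF]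
      rw [dif_pos hβ'lt]
    rw [this] at hβ'eq
    have hcfg : GoodCfg xv yv eta D' β' :=
      hβ'eq ▸ (hstep β' hβ'lt).choose_spec.2
    obtain ⟨R, h1, h2, h3, h4, h5⟩ := hcfg
    exact ⟨R, h1, rkGe_anti hβ'le h2, h3, h4, h5⟩

/-- The full construction: a coherent sequence of level data, all realized. -/
theorem exists_seq (hxv : Function.Injective xv) (hyv : Function.Injective yv)
    (hR : ∀ β < (Cardinal.aleph 1).ord, ∃ w : Set M₀, w.Finite ∧ w.Nonempty ∧
      @rkGe Lg M₀ (str xv yv eta) 0 (Cardinal.aleph 1) β w) :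
    ∃ Ds : (n : ℕ) → CData n,
      (∀ n, Good xv yv eta (Ds n)) ∧ (∀ n, CExtends (Ds n) (Ds (n + 1))) := by
  classical
  have base := good_base xv yv eta hR
  have step := fun n (D : CData n) (hD : Good xv yv eta D) =>
    good_step xv yv eta hxv hyv D hD
  let Ds : (n : ℕ) → {D : CData n // Good xv yv eta D} := fun n =>
    Nat.rec ⟨_, base⟩ (fun n p => ⟨(step n p.1 p.2).choose, (step n p.1 p.2).choose_spec.2⟩) n
  refine ⟨fun n => (Ds n).1, fun n => (Ds n).2, fun n => ?_⟩
  exact (step n (Ds n).1 (Ds n).2).choose_spec.1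

end Sequence
section Limit

open FirstOrder FirstOrder.Language

/-- restriction of an infinite binary sequence -/
def restr (ξ : ℕ → Bool) (n : ℕ) : Fin n → Bool := fun i => ξ i

theorem restr_init (ξ : ℕ → Bool) (n : ℕ) : Fin.init (restr ξ (n + 1)) = restr ξ n := rfl

theorem restr_snoc (ξ : ℕ → Bool) (n : ℕ) :
    restr ξ (n + 1) = Fin.snoc (restr ξ n) (ξ n) := by
  funext j
  induction j using Fin.lastCases with
  | last => rw [Fin.snoc_last]; rfl
  | cast j => rw [Fin.snoc_castSucc]; rfl

variable {M₀ : Type} (xv yv : M₀ → ℕ → Bool) (eta : M₀ → M₀ → ℕ → ℕ)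

theorem main_construction (hxv : Function.Injective xv) (hyv : Function.Injective yv)
    (f : (ℕ → ℕ) → (ℕ → Bool) × (ℕ → Bool)) (hf : Continuous f)
    (heta : ∀ p q, f (eta p q) = (xv p, yv q))
    (hR : ∀ β < (Cardinal.aleph 1).ord, ∃ w : Set M₀, w.Finite ∧ w.Nonempty ∧
      @rkGe Lg M₀ (str xv yv eta) 0 (Cardinal.aleph 1) β w) :
    ∃ P₁ P₂ : Set (ℕ → Bool),
      Perfect P₁ ∧ P₁.Nonempty ∧ Perfect P₂ ∧ P₂.Nonempty ∧ P₁ ×ˢ P₂ ⊆ Set.range f := by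
  classical
  obtain ⟨Ds, hGood, hExt⟩ := exists_seq xv yv eta hxv hyv hR
  set lvl : ℕ → ℕ := fun n => (Ds n).l with hlvldef
  have hlvl : StrictMono lvl := strictMono_nat_of_lt_succ (fun n => (hExt n).hl)
  have hmlt : ∀ m : ℕ, m < lvl (m + 1) :=
    fun m => lt_of_lt_of_le (Nat.lt_succ_self m) hlvl.le_apply
  -- coherence
  have coherσ : ∀ (ξ : ℕ → Bool) (n n' : ℕ), n ≤ n' → ∀ m (hm : m < lvl n)
      (hm' : m < lvl n'), (Ds n').σ (restr ξ n') ⟨m, hm'⟩ = (Ds n).σ (restr ξ n) ⟨m, hm⟩ := by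
    intro ξ n n' h
    induction n', h using Nat.le_induction with
    | base => intro m hm hm'; rfl
    | succ n' hn IH =>
      intro m hm hm'
      have hm'' : m < lvl n' := lt_of_lt_of_le hm (hlvl.monotone hn)
      have h1 := (hExt n').hσ (restr ξ (n' + 1)) m hm''
      rw [restr_init] at h1
      exact h1.trans (IH m hm hm'')
  have coherτ : ∀ (ξ : ℕ → Bool) (n n' : ℕ), n ≤ n' → ∀ m (hm : m < lvl n)
      (hm' : m < lvl n'), (Ds n').τ (restr ξ n') ⟨m, hm'⟩ = (Ds n).τ (restr ξ n) ⟨m, hm⟩ := by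
    intro ξ n n' h
    induction n', h using Nat.le_induction with
    | base => intro m hm hm'; rfl
    | succ n' hn IH =>
      intro m hm hm'
      have hm'' : m < lvl n' := lt_of_lt_of_le hm (hlvl.monotone hn)
      have h1 := (hExt n').hτ (restr ξ (n' + 1)) m hm''
      rw [restr_init] at h1
      exact h1.trans (IH m hm hm'')
  have cohere : ∀ (ξ ζ : ℕ → Bool) (n n' : ℕ), n ≤ n' → ∀ m (hm : m < lvl n)
      (hm' : m < lvl n'), (Ds n').e (restr ξ n') (restr ζ n') ⟨m, hm'⟩ =
        (Ds n).e (restr ξ n) (restr ζ n) ⟨m, hm⟩ := by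
    intro ξ ζ n n' h
    induction n', h using Nat.le_induction with
    | base => intro m hm hm'; rfl
    | succ n' hn IH =>
      intro m hm hm'
      have hm'' : m < lvl n' := lt_of_lt_of_le hm (hlvl.monotone hn)
      have h1 := (hExt n').he (restr ξ (n' + 1)) (restr ζ (n' + 1)) m hm''
      rw [restr_init, restr_init] at h1
      exact h1.trans (IH m hm hm'')
  -- the limit functions
  set u : (ℕ → Bool) → ℕ → Bool :=
    fun ξ m => (Ds (m + 1)).σ (restr ξ (m + 1)) ⟨m, hmlt m⟩ with hudef
  set v : (ℕ → Bool) → ℕ → Bool :=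
    fun ζ m => (Ds (m + 1)).τ (restr ζ (m + 1)) ⟨m, hmlt m⟩ with hvdef
  set z : (ℕ → Bool) → (ℕ → Bool) → ℕ → ℕ :=
    fun ξ ζ m => (Ds (m + 1)).e (restr ξ (m + 1)) (restr ζ (m + 1)) ⟨m, hmlt m⟩ with hzdef
  have u_spec : ∀ (ξ : ℕ → Bool) (n m : ℕ) (hm : m < lvl n),
      u ξ m = (Ds n).σ (restr ξ n) ⟨m, hm⟩ := by
    intro ξ n m hm
    rcases le_total n (m + 1) with h | h
    · exact coherσ ξ n (m + 1) h m hm (hmlt m)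
    · exact (coherσ ξ (m + 1) n h m (hmlt m) hm).symm
  have v_spec : ∀ (ζ : ℕ → Bool) (n m : ℕ) (hm : m < lvl n),
      v ζ m = (Ds n).τ (restr ζ n) ⟨m, hm⟩ := by
    intro ζ n m hm
    rcases le_total n (m + 1) with h | h
    · exact coherτ ζ n (m + 1) h m hm (hmlt m)
    · exact (coherτ ζ (m + 1) n h m (hmlt m) hm).symm
  have z_spec : ∀ (ξ ζ : ℕ → Bool) (n m : ℕ) (hm : m < lvl n),
      z ξ ζ m = (Ds n).e (restr ξ n) (restr ζ n) ⟨m, hm⟩ := by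
    intro ξ ζ n m hm
    rcases le_total n (m + 1) with h | h
    · exact cohere ξ ζ n (m + 1) h m hm (hmlt m)
    · exact (cohere ξ ζ (m + 1) n h m (hmlt m) hm).symm
  -- continuity
  have hucont : Continuous u := by
    apply continuous_pi
    intro m
    exact (continuous_of_discreteTopology
      (f := fun s : Fin (m + 1) → Bool => (Ds (m + 1)).σ s ⟨m, hmlt m⟩)).comp
      (continuous_pi fun i : Fin (m + 1) => continuous_apply (i : ℕ))
  have hvcont : Continuous v := by
    apply continuous_pi
    intro m
    exact (continuous_of_discreteTopology
      (f := fun s : Fin (m + 1) → Bool => (Ds (m + 1)).τ s ⟨m, hmlt m⟩)).comp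
      (continuous_pi fun i : Fin (m + 1) => continuous_apply (i : ℕ))
  -- injectivity
  have huinj : Function.Injective u := by
    intro ξ ζ huv
    by_contra hne
    have hne' : ∃ i, ξ i ≠ ζ i := Function.ne_iff.mp hne
    set i₀ := Nat.find hne' with hi₀
    have hdiff : ξ i₀ ≠ ζ i₀ := Nat.find_spec hne'
    have hmin : ∀ j, j < i₀ → ξ j = ζ j := by
      intro j hj
      by_contra hjne
      exact Nat.find_min hne' hj hjne
    have hs : restr ξ i₀ = restr ζ i₀ := by
      funext j
      exact hmin j j.2
    obtain ⟨m, hm⟩ := (hExt i₀).hsσ (restr ξ i₀)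
    have hξs : restr ξ (i₀ + 1) = Fin.snoc (restr ξ i₀) (ξ i₀) := restr_snoc ξ i₀
    have hζs : restr ζ (i₀ + 1) = Fin.snoc (restr ζ i₀) (ζ i₀) := restr_snoc ζ i₀
    have hum := congrFun huv (m : ℕ)
    rw [u_spec ξ (i₀ + 1) m m.2, u_spec ζ (i₀ + 1) m m.2, hξs, hζs, ← hs] at hum
    cases hb1 : ξ i₀ <;> cases hb2 : ζ i₀
    · exact hdiff (hb1.trans hb2.symm)
    · rw [hb1, hb2] at hum; exact hm (by convert hum using 2 <;> exact (Fin.eta m _).symm)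
    · rw [hb1, hb2] at hum; exact hm (by symm at hum; convert hum using 2 <;> exact (Fin.eta m _).symm)
    · exact hdiff (hb1.trans hb2.symm)
  have hvinj : Function.Injective v := by
    intro ξ ζ huv
    by_contra hne
    have hne' : ∃ i, ξ i ≠ ζ i := Function.ne_iff.mp hne
    set i₀ := Nat.find hne' with hi₀
    have hdiff : ξ i₀ ≠ ζ i₀ := Nat.find_spec hne'
    have hmin : ∀ j, j < i₀ → ξ j = ζ j := by
      intro j hj
      by_contra hjne
      exact Nat.find_min hne' hj hjne
    have hs : restr ξ i₀ = restr ζ i₀ := by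
      funext j
      exact hmin j j.2
    obtain ⟨m, hm⟩ := (hExt i₀).hsτ (restr ξ i₀)
    have hξs : restr ξ (i₀ + 1) = Fin.snoc (restr ξ i₀) (ξ i₀) := restr_snoc ξ i₀
    have hζs : restr ζ (i₀ + 1) = Fin.snoc (restr ζ i₀) (ζ i₀) := restr_snoc ζ i₀
    have hum := congrFun huv (m : ℕ)
    rw [v_spec ξ (i₀ + 1) m m.2, v_spec ζ (i₀ + 1) m m.2, hξs, hζs, ← hs] at hum
    cases hb1 : ξ i₀ <;> cases hb2 : ζ i₀
    · exact hdiff (hb1.trans hb2.symm)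
    · rw [hb1, hb2] at hum; exact hm (by convert hum using 2 <;> exact (Fin.eta m _).symm)
    · rw [hb1, hb2] at hum; exact hm (by symm at hum; convert hum using 2 <;> exact (Fin.eta m _).symm)
    · exact hdiff (hb1.trans hb2.symm)
  -- membership: every pair of limit points is in the range of f
  have hΛ0 : (0 : Ordinal.{0}) < (Cardinal.aleph 1).ord := by
    rw [Cardinal.lt_ord]
    simpa using lt_of_lt_of_le Cardinal.aleph0_pos (Cardinal.aleph0_le_aleph 1)
  have hcfg : ∀ n : ℕ, GoodCfg xv yv eta (Ds n) 0 := fun n => hGood n 0 hΛ0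
  choose Rn hRinj hRrk hσn hτn hen using hcfg
  have hmem : ∀ ξ ζ : ℕ → Bool, (u ξ, v ζ) ∈ Set.range f := by
    intro ξ ζ
    set xs : ℕ → M₀ := fun n => Rn n (false, restr ξ n) with hxs
    set ys : ℕ → M₀ := fun n => Rn n (true, restr ζ n) with hys
    have ht1 : Filter.Tendsto (fun n => eta (xs n) (ys n)) Filter.atTop (nhds (z ξ ζ)) := by
      rw [tendsto_pi_nhds]
      intro m
      apply Filter.Tendsto.congr' _ tendsto_const_nhds
      rw [Filter.EventuallyEq, Filter.eventually_atTop]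
      refine ⟨m + 1, fun n hn => ?_⟩
      have hm : m < lvl n := lt_of_lt_of_le (Nat.lt_of_lt_of_le (Nat.lt_succ_self m) hn)
        hlvl.le_apply
      rw [z_spec ξ ζ n m hm]
      exact (hen n (restr ξ n) (restr ζ n) m hm).symm
    have ht2 : Filter.Tendsto (fun n => xv (xs n)) Filter.atTop (nhds (u ξ)) := by
      rw [tendsto_pi_nhds]
      intro m
      apply Filter.Tendsto.congr' _ tendsto_const_nhds
      rw [Filter.EventuallyEq, Filter.eventually_atTop]
      refine ⟨m + 1, fun n hn => ?_⟩
      have hm : m < lvl n := lt_of_lt_of_le (Nat.lt_of_lt_of_le (Nat.lt_succ_self m) hn)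
        hlvl.le_apply
      rw [u_spec ξ n m hm]
      exact (hσn n (restr ξ n) m hm).symm
    have ht3 : Filter.Tendsto (fun n => yv (ys n)) Filter.atTop (nhds (v ζ)) := by
      rw [tendsto_pi_nhds]
      intro m
      apply Filter.Tendsto.congr' _ tendsto_const_nhds
      rw [Filter.EventuallyEq, Filter.eventually_atTop]
      refine ⟨m + 1, fun n hn => ?_⟩
      have hm : m < lvl n := lt_of_lt_of_le (Nat.lt_of_lt_of_le (Nat.lt_succ_self m) hn)
        hlvl.le_apply
      rw [v_spec ζ n m hm]
      exact (hτn n (restr ζ n) m hm).symm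
    have ht4 : Filter.Tendsto (fun n => f (eta (xs n) (ys n))) Filter.atTop
        (nhds (f (z ξ ζ))) := (hf.tendsto _).comp ht1
    have ht5 : Filter.Tendsto (fun n => f (eta (xs n) (ys n))) Filter.atTop
        (nhds (u ξ, v ζ)) := by
      have : (fun n => f (eta (xs n) (ys n))) = fun n => (xv (xs n), yv (ys n)) := by
        funext n; exact heta (xs n) (ys n)
      rw [this]
      exact ht2.prodMk_nhds ht3
    exact ⟨z ξ ζ, (tendsto_nhds_unique ht4 ht5)⟩
  -- perfect sets
  have hperf : ∀ (g : (ℕ → Bool) → ℕ → Bool), Continuous g → Function.Injective g →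
      Perfect (Set.range g) ∧ (Set.range g).Nonempty := by
    intro g hgc hginj
    refine ⟨⟨(isCompact_range hgc).isClosed, ?_⟩, ⟨g (fun _ => false), Set.mem_range_self _⟩⟩
    intro x hx
    rw [accPt_iff_nhds]
    intro U hU
    obtain ⟨ξ, rfl⟩ := hx
    set ξs : ℕ → (ℕ → Bool) := fun j i => if i = j then !ξ i else ξ i with hξs
    have hts : Filter.Tendsto ξs Filter.atTop (nhds ξ) := by
      rw [tendsto_pi_nhds]
      intro i
      apply Filter.Tendsto.congr' _ tendsto_const_nhds
      rw [Filter.EventuallyEq, Filter.eventually_atTop]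
      refine ⟨i + 1, fun j hj => ?_⟩
      have : i ≠ j := by omega
      simp [hξs, this]
    have htg : Filter.Tendsto (fun j => g (ξs j)) Filter.atTop (nhds (g ξ)) :=
      (hgc.tendsto _).comp hts
    have hev : ∀ᶠ j in Filter.atTop, g (ξs j) ∈ U := htg hU
    obtain ⟨j, hj⟩ := hev.exists
    refine ⟨g (ξs j), ⟨hj, Set.mem_range_self _⟩, ?_⟩
    intro hcontra
    have := hginj hcontra
    have hj' := congrFun this j
    simp [hξs] at hj'
  obtain ⟨hP1, hP1ne⟩ := hperf u hucont huinj
  obtain ⟨hP2, hP2ne⟩ := hperf v hvcont hvinj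
  refine ⟨Set.range u, Set.range v, hP1, hP1ne, hP2, hP2ne, ?_⟩
  rintro ⟨x, y⟩ ⟨⟨ξ, rfl⟩, ⟨ζ, rfl⟩⟩
  exact hmem ξ ζ

end Limit
/-- if `Pr_{ω₁}(λ)` and an analytic set `B ⊆ 2^ω × 2^ω` contains a
`(λ, λ)`-rectangle, then `B` contains a perfect rectangle. -/
theorem stmt_9 (lam : Cardinal.{0})
    (hPr : Pr 0 (Cardinal.aleph 1).ord lam (Cardinal.aleph 1) ℵ₀)
    (B : Set ((ℕ → Bool) × (ℕ → Bool))) (hB : MeasureTheory.AnalyticSet B)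
    (A₁ A₂ : Set (ℕ → Bool)) (hA₁ : Cardinal.mk A₁ = lam) (hA₂ : Cardinal.mk A₂ = lam)
    (hAB : A₁ ×ˢ A₂ ⊆ B) :
    ∃ P₁ P₂ : Set (ℕ → Bool),
      Perfect P₁ ∧ P₁.Nonempty ∧ Perfect P₂ ∧ P₂.Nonempty ∧ P₁ ×ˢ P₂ ⊆ B := by
  classical
  have hΛ0 : (0 : Ordinal.{0}) < (Cardinal.aleph 1).ord := by
    rw [Cardinal.lt_ord]
    simpa using lt_of_lt_of_le Cardinal.aleph0_pos (Cardinal.aleph0_le_aleph 1)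
  -- A₁ is nonempty, by applying `Pr` to any structure on `↥A₁`
  have hA₁ne : Nonempty ↥A₁ := by
    obtain ⟨w, hwfin, hwne, hwrk⟩ := hPr Lg ↥A₁
      (str (fun p => p.val) (fun p => p.val) (fun _ _ _ => 0)) hA₁ Lg_card_le 0 hΛ0
    exact ⟨hwne.choose⟩
  have hA₂ne : Nonempty ↥A₂ := by
    rw [← Cardinal.mk_ne_zero_iff] at hA₁ne ⊢
    rw [hA₂, ← hA₁]
    exact hA₁ne
  -- analytic set: B is the range of a continuous function
  have hBdef := (MeasureTheory.AnalyticSet_def B) ▸ hB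
  rcases hBdef with hBe | ⟨f, hf, hfr⟩
  · exfalso
    obtain ⟨a₁⟩ := hA₁ne
    obtain ⟨a₂⟩ := hA₂ne
    have : (a₁.val, a₂.val) ∈ B := hAB (Set.mk_mem_prod a₁.2 a₂.2)
    rw [hBe] at this
    exact this
  · -- the Shelah model
    have hequiv : Nonempty (↥A₁ ≃ ↥A₂) := Cardinal.eq.mp (hA₁.trans hA₂.symm)
    obtain ⟨g₂⟩ := hequiv
    set xv : ↥A₁ → ℕ → Bool := fun p => p.val with hxvdef
    set yv : ↥A₁ → ℕ → Bool := fun p => (g₂ p).val with hyvdef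
    have hwit : ∀ p q : ↥A₁, ∃ c : ℕ → ℕ, f c = (xv p, yv q) := by
      intro p q
      have : (xv p, yv q) ∈ B := hAB (Set.mk_mem_prod p.2 (g₂ q).2)
      rw [← hfr] at this
      exact this
    choose eta heta using hwit
    have hxv : Function.Injective xv := fun p q h => Subtype.ext h
    have hyv : Function.Injective yv :=
      fun p q h => g₂.injective (Subtype.ext h)
    have hR := hPr Lg ↥A₁ (str xv yv eta) hA₁ Lg_card_le
    obtain ⟨P₁, P₂, h1, h2, h3, h4, h5⟩ :=
      main_construction xv yv eta hxv hyv f hf heta hR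
    exact ⟨P₁, P₂, h1, h2, h3, h4, by rwa [hfr] at h5⟩
end Sh522
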